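/- Let X be a geodesic metric space and Y ⊆ X an (A,D)-contracting subset via a contracting map g : X → Y. Then for every integer n ≥ 4D+2, every ρ ∈ (0,1], and every r > 8D: if x₁, x₂ ∈ ∂N_r(Y) satisfy d(x₁,x₂) ≥ nr, then every rectifiable path γ connecting x₁ and x₂ that stays in the complement of the (ρr)-neighborhood of Y has length at least (Aρ/(4D))·r². -/

import Mathlib

open Metric

/-- A geodesic segment parametrized by arclength on `[a,b]`. -/
def IsGeodesicSeg {X : Type*} [MetricSpace X] (γ : ℝ → X) (a b : ℝ) : Prop :=
  a ≤ b ∧ ∀ s ∈ Set.Icc a b, ∀ t ∈ Set.Icc a b, dist (γ s) (γ t) = |s - t|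

/-- `X` is a geodesic metric space. -/
def GeodesicSpace' (X : Type*) [MetricSpace X] : Prop :=
  ∀ x y : X, ∃ γ : ℝ → X, IsGeodesicSeg γ 0 (dist x y) ∧ γ 0 = x ∧ γ (dist x y) = y

/-- A map is `(D,D)`-coarsely Lipschitz. -/
def CoarseLipschitz {X : Type*} [MetricSpace X] (D : ℝ) (g : X → X) : Prop :=
  ∀ x y : X, dist (g x) (g y) ≤ D * dist x y + D

/-- `g : X → Y` is `(A,D)`-contracting. -/
def ContractingMap {X : Type*} [MetricSpace X] (A D : ℝ) (Y : Set X) (g : X → X) : Prop :=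
  (∀ x, g x ∈ Y) ∧ CoarseLipschitz D g ∧ (∀ y ∈ Y, dist y (g y) ≤ D) ∧
  (∀ x x₁ x₂ : X, dist x x₁ ≤ A * infDist x Y → dist x x₂ ≤ A * infDist x Y →
    dist (g x₁) (g x₂) ≤ D)

open Metric

noncomputable def nextPt {X : Type*} [MetricSpace X] (γ : ℝ → X) (b δ c : ℝ) : ℝ :=
  sSup {s | s ∈ Set.Icc c b ∧ dist (γ c) (γ s) ≤ δ}

noncomputable def seqPt {X : Type*} [MetricSpace X] (γ : ℝ → X) (a b δ : ℝ) : ℕ → ℝ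
  | 0 => a
  | i + 1 => nextPt γ b δ (seqPt γ a b δ i)

lemma nextPt_spec {X : Type*} [MetricSpace X] {γ : ℝ → X} {a b δ : ℝ}
    (hδ : 0 < δ) (hcont : ContinuousOn γ (Set.Icc a b)) {c : ℝ} (hc : c ∈ Set.Icc a b) :
    nextPt γ b δ c ∈ Set.Icc c b ∧ dist (γ c) (γ (nextPt γ b δ c)) ≤ δ ∧
      (nextPt γ b δ c < b → dist (γ c) (γ (nextPt γ b δ c)) = δ) := by
  set S : Set ℝ := {s | s ∈ Set.Icc c b ∧ dist (γ c) (γ s) ≤ δ} with hS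
  have hsub : Set.Icc c b ⊆ Set.Icc a b := Set.Icc_subset_Icc hc.1 le_rfl
  have hclosed : IsClosed S := by
    have : S = Set.Icc c b ∩ (fun s => dist (γ c) (γ s)) ⁻¹' Set.Iic δ := by
      ext s; simp [hS, Set.mem_Iic]
    rw [this]
    exact ContinuousOn.preimage_isClosed_of_isClosed
      (continuous_const.dist continuous_id |>.comp_continuousOn (hcont.mono hsub) |>.congr
        (fun _ _ => rfl)) isClosed_Icc isClosed_Iic
  have hne : S.Nonempty := ⟨c, ⟨le_rfl, hc.2⟩, by simp [hδ.le]⟩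
  have hbdd : BddAbove S := ⟨b, fun s hs => hs.1.2⟩
  have hmem : nextPt γ b δ c ∈ S := hclosed.csSup_mem hne hbdd
  refine ⟨hmem.1, hmem.2, fun hlt => ?_⟩
  by_contra hne'
  have hltδ : dist (γ c) (γ (nextPt γ b δ c)) < δ := lt_of_le_of_ne hmem.2 hne'
  set c' := nextPt γ b δ c with hc'
  have hc'mem : c' ∈ Set.Icc a b := ⟨hc.1.trans hmem.1.1, hmem.1.2⟩
  have hcw : ContinuousWithinAt (fun s => dist (γ c) (γ s)) (Set.Icc a b) c' :=
    (continuous_const.dist continuous_id |>.comp_continuousOn hcont).continuousWithinAt hc'mem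
  have hev : {s | dist (γ c) (γ s) < δ} ∈ nhdsWithin c' (Set.Icc a b) :=
    hcw (Iio_mem_nhds hltδ)
  rw [Metric.mem_nhdsWithin_iff] at hev
  obtain ⟨ε, hε, hball⟩ := hev
  set s₀ := min b (c' + ε / 2) with hs₀
  have hgt : c' < s₀ := lt_min hlt (by linarith)
  have hs₀b : s₀ ≤ b := min_le_left _ _
  have hs₀mem : s₀ ∈ Set.Icc a b := ⟨hc'mem.1.trans hgt.le, hs₀b⟩
  have hs₀ball : s₀ ∈ ball c' ε := by
    rw [mem_ball, Real.dist_eq, abs_of_nonneg (by linarith)]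
    have : s₀ ≤ c' + ε / 2 := min_le_right _ _
    linarith
  have hs₀S : s₀ ∈ S := ⟨⟨hmem.1.1.trans hgt.le, hs₀b⟩, (hball ⟨hs₀ball, hs₀mem⟩).le⟩
  exact absurd (le_csSup hbdd hs₀S) (not_le.mpr hgt)

/-- If `Y` is `(A,D)`-contracting in a geodesic space `X`, `n ≥ 4D+2`, `ρ ∈ (0,1]`, `r > 8D`,
and `x₁, x₂ ∈ ∂N_r(Y)` with `d(x₁,x₂) ≥ nr`, then any rectifiable path from `x₁` to `x₂`
avoiding the `ρr`-neighborhood of `Y` has length at least `(Aρ/(4D))·r²`. -/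
theorem contracting_divergence_quadratic {X : Type*} [MetricSpace X]
    (hgeo : GeodesicSpace' X)
    (A D : ℝ) (hA : 0 < A) (hA1 : A ≤ 1) (hD : 1 ≤ D)
    (Y : Set X) (g : X → X) (hg : ContractingMap A D Y g)
    (n : ℕ) (hn : (4 * D + 2 : ℝ) ≤ (n : ℝ)) (ρ : ℝ) (hρ : 0 < ρ) (hρ1 : ρ ≤ 1)
    (r : ℝ) (hr : 8 * D < r)
    (x₁ x₂ : X) (h₁ : infDist x₁ Y = r) (h₂ : infDist x₂ Y = r)
    (hfar : (n : ℝ) * r ≤ dist x₁ x₂)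
    (γ : ℝ → X) (a b : ℝ) (hab : a ≤ b) (hcont : ContinuousOn γ (Set.Icc a b))
    (hga : γ a = x₁) (hgb : γ b = x₂)
    (havoid : ∀ t ∈ Set.Icc a b, ρ * r ≤ infDist (γ t) Y) :
    ENNReal.ofReal (A * ρ / (4 * D) * r ^ 2) ≤ eVariationOn γ (Set.Icc a b) := by
  obtain ⟨hgY, hgL, hgD, hgC⟩ := hg
  have hD0 : (0 : ℝ) < D := by linarith
  have hr0 : (0 : ℝ) < r := by nlinarith
  set δ := A * ρ * r with hδdef
  have hδ : 0 < δ := by positivity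
  set M := A * ρ / (4 * D) * r ^ 2 with hM
  have hYne : Y.Nonempty := ⟨g x₁, hgY x₁⟩
  -- distance from boundary points to their projections
  have hproj : ∀ x : X, infDist x Y = r → dist x (g x) ≤ (D + 1) * r + 2 * D := by
    intro x hx
    refine le_of_forall_pos_le_add fun ε hε => ?_
    have hD1 : (0 : ℝ) < D + 1 := by linarith
    have hlt : infDist x Y < r + ε / (D + 1) := by
      rw [hx]; linarith [div_pos hε hD1]
    obtain ⟨y, hy, hxy⟩ := (infDist_lt_iff hYne).mp hlt
    have h3 := dist_triangle4 x y (g y) (g x)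
    have h2 := hgL y x
    rw [dist_comm y x] at h2
    have h1 := hgD y hy
    have hcancel : (D + 1) * (ε / (D + 1)) = ε := mul_div_cancel₀ ε (by linarith)
    nlinarith [mul_lt_mul_of_pos_left hxy hD0]
  -- the sample sequence
  set t : ℕ → ℝ := seqPt γ a b δ with ht
  have ht0 : t 0 = a := rfl
  have hmem : ∀ i, t i ∈ Set.Icc a b := by
    intro i
    induction i with
    | zero => exact ⟨le_rfl, hab⟩
    | succ i ih =>
      have hs := nextPt_spec hδ hcont ih
      exact ⟨ih.1.trans hs.1.1, hs.1.2⟩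
  have hstep : ∀ i, t (i + 1) ∈ Set.Icc (t i) b ∧ dist (γ (t i)) (γ (t (i + 1))) ≤ δ ∧
      (t (i + 1) < b → dist (γ (t i)) (γ (t (i + 1))) = δ) :=
    fun i => nextPt_spec hδ hcont (hmem i)
  have hmono : Monotone t := monotone_nat_of_le_succ fun i => (hstep i).1.1
  -- projections of consecutive samples are D-close
  have hgstep : ∀ i, dist (g (γ (t i))) (g (γ (t (i + 1)))) ≤ D := by
    intro i
    refine hgC (γ (t i)) (γ (t i)) (γ (t (i + 1))) ?_ ?_
    · have := havoid _ (hmem i)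
      rw [dist_self]
      nlinarith
    · calc dist (γ (t i)) (γ (t (i + 1))) ≤ δ := (hstep i).2.1
        _ = A * (ρ * r) := by rw [hδdef]; ring
        _ ≤ A * infDist (γ (t i)) Y :=
          mul_le_mul_of_nonneg_left (havoid _ (hmem i)) hA.le
  -- generic lower bound on variation from m full steps
  have hbound : ∀ m : ℕ, (∀ i ∈ Finset.range m,
      edist (γ (t (i + 1))) (γ (t i)) = ENNReal.ofReal δ) →
      ENNReal.ofReal ((m : ℝ) * δ) ≤ eVariationOn γ (Set.Icc a b) := by
    intro m hm
    have hsum := eVariationOn.sum_le (f := γ) (n := m) hmono hmem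
    rw [Finset.sum_congr rfl hm, Finset.sum_const, Finset.card_range, nsmul_eq_mul,
      ← ENNReal.ofReal_natCast, ← ENNReal.ofReal_mul (Nat.cast_nonneg m)] at hsum
    exact hsum
  by_cases hK : ∃ i, t i = b
  · -- the sequence reaches b at step K
    set K := Nat.find hK with hKdef
    have htK : t K = b := Nat.find_spec hK
    have hnr : (0 : ℝ) < (n : ℝ) * r := by nlinarith
    have hx12 : x₁ ≠ x₂ := by
      intro h
      rw [h, dist_self] at hfar
      linarith
    have hK0 : t 0 ≠ b := by
      rw [ht0]
      intro h
      exact hx12 (by rw [← hga, ← hgb, h])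
    have hK1 : 1 ≤ K := by
      rcases Nat.eq_zero_or_pos K with h | h
      · exact absurd (h ▸ htK) hK0
      · exact h
    -- upper bound on dist of projections
    have hup : dist (g x₁) (g x₂) ≤ (K : ℝ) * D := by
      have h4 := dist_le_range_sum_dist (fun i => g (γ (t i))) K
      simp only [ht0, hga, htK, hgb] at h4
      calc dist (g x₁) (g x₂) ≤ ∑ i ∈ Finset.range K,
            dist (g (γ (t i))) (g (γ (t (i + 1)))) := h4
        _ ≤ (Finset.range K).card • D :=
            Finset.sum_le_card_nsmul _ _ D fun i _ => hgstep i
        _ = (K : ℝ) * D := by rw [Finset.card_range, nsmul_eq_mul]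
    -- lower bound on dist of projections
    have hlow : 2 * D * r - 4 * D ≤ dist (g x₁) (g x₂) := by
      have e1 := hproj x₁ h₁
      have e2 := hproj x₂ h₂
      have h5 := dist_triangle4 x₁ (g x₁) (g x₂) x₂
      rw [dist_comm (g x₂) x₂] at h5
      nlinarith [mul_le_mul_of_nonneg_right hn hr0.le]
    have hKge : 2 * r - 4 ≤ (K : ℝ) := by
      have h6 : (2 * r - 4) * D ≤ (K : ℝ) * D := by linarith
      exact (mul_le_mul_iff_left₀ hD0).mp h6
    have heach : ∀ i ∈ Finset.range (K - 1),
        edist (γ (t (i + 1))) (γ (t i)) = ENNReal.ofReal δ := by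
      intro i hi
      rw [Finset.mem_range] at hi
      have hiK : i + 1 < K := by omega
      have hne : t (i + 1) ≠ b := Nat.find_min hK hiK
      have hlt : t (i + 1) < b := lt_of_le_of_ne (hmem (i + 1)).2 hne
      rw [edist_dist, dist_comm, (hstep i).2.2 hlt]
    refine le_trans (ENNReal.ofReal_le_ofReal ?_) (hbound (K - 1) heach)
    have hcast : ((K - 1 : ℕ) : ℝ) = (K : ℝ) - 1 := by
      rw [Nat.cast_sub hK1]; norm_num
    rw [hcast]
    have h4D : (0 : ℝ) < 4 * D := by linarith
    have key : r / (4 * D) ≤ (K : ℝ) - 1 := by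
      rw [div_le_iff₀ h4D]
      nlinarith [mul_le_mul_of_nonneg_right hKge h4D.le,
        mul_nonneg (by linarith : (0 : ℝ) ≤ 8 * D - 8) hr0.le]
    calc M = r / (4 * D) * (A * ρ * r) := by rw [hM]; field_simp
      _ ≤ ((K : ℝ) - 1) * (A * ρ * r) :=
          mul_le_mul_of_nonneg_right key (by positivity)
      _ = ((K : ℝ) - 1) * δ := by rw [hδdef]
  · -- the sequence never reaches b: every step has length exactly δ
    have hall : ∀ i, t i < b := fun i =>
      lt_of_le_of_ne (hmem i).2 fun h => hK ⟨i, h⟩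
    set N := Nat.ceil (M / δ) with hN
    have heach : ∀ i ∈ Finset.range N,
        edist (γ (t (i + 1))) (γ (t i)) = ENNReal.ofReal δ := by
      intro i _
      rw [edist_dist, dist_comm, (hstep i).2.2 (hall (i + 1))]
    refine le_trans (ENNReal.ofReal_le_ofReal ?_) (hbound N heach)
    have : M / δ ≤ (N : ℝ) := Nat.le_ceil _
    rw [div_le_iff₀ hδ] at this
    linarith
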